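/- arXiv:2302.02501 — 3 statements merged into one kernel-verified Lean document; each statement's English description precedes it below -/
import Mathlib

section
/- Let ρ: (σ_1, t^{(1)}, ν_1), …, (σ_n, t^{(n)}, ν_n) be a run of a race-free TPO, let j be a position, and let c be a clock referred to in the guard G(σ_j). Define E = { e ∈ Π | c ∈ R(e) and e ≺ σ_j }. Then: (a) if E = ∅, no event σ_k with k < j resets c (i.e., c ∉ R(σ_k) for all k < j); (b) if E ≠ ∅, then E has a ≺-maximum element, that element occurs in the run at some position m < j, and c ∉ R(σ_k) for all k with m < k < j; that is, the last reset of c before position j in the run occurs exactly at the ≺-maximum element of E. -/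
/-- Comparison operators appearing in atomic clock constraints. -/
inductive Cmp where
  | le : Cmp
  | ge : Cmp

/-- `Cmp.holds cmp x a` means `x ⋈ a`. -/
def Cmp.holds : Cmp → ℝ → ℝ → Prop
  | .le, x, a => x ≤ a
  | .ge, x, a => a ≤ x

/-- A timed partial order over events `E` with clocks `C`:
a strict partial order `prec`, a guard map assigning to each event a finite
conjunction (list) of atomic constraints `c ⋈ a` with `a ≥ 0`, and a reset map. -/
structure TPO (E C : Type) where
  prec : E → E → Prop
  prec_irrefl : ∀ e, ¬ prec e e
  prec_trans : ∀ e₁ e₂ e₃, prec e₁ e₂ → prec e₂ e₃ → prec e₁ e₃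
  guard : E → List (C × Cmp × ℝ)
  guard_nonneg : ∀ e, ∀ p ∈ guard e, (0 : ℝ) ≤ p.2.2
  reset : E → Set C

/-- An event is dependent on a clock iff its guard refers to the clock or resets it. -/
def TPO.Dependent {E C : Type} (T : TPO E C) (e : E) (c : C) : Prop :=
  (∃ p ∈ T.guard e, p.1 = c) ∨ c ∈ T.reset e

/-- A TPO is race-free iff any two distinct events dependent on a common clock
are comparable in the partial order. -/
def TPO.RaceFree {E C : Type} (T : TPO E C) : Prop :=
  ∀ (c : C) (e₁ e₂ : E), T.Dependent e₁ c → T.Dependent e₂ c → e₁ ≠ e₂ →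
    T.prec e₁ e₂ ∨ T.prec e₂ e₁

/-- `T.IsRun n σ t ν`: positions `1,…,n` of `σ` enumerate the events without
repetition, `t 0 = 0`, `ν 0 ≡ 0`, timestamps are nondecreasing, the event
sequence is a linearization of `prec`, at each step the time-advanced valuation
satisfies the guard, and then the clocks in the reset set are set to `0`. -/
def TPO.IsRun {E C : Type} (T : TPO E C) (n : ℕ)
    (σ : ℕ → E) (t : ℕ → ℝ) (ν : ℕ → C → ℝ) : Prop :=
  t 0 = 0 ∧
  (∀ c, ν 0 c = 0) ∧
  Set.BijOn σ (Set.Icc 1 n) (Set.univ : Set E) ∧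
  (∀ j, 1 ≤ j → j ≤ n → t (j - 1) ≤ t j) ∧
  (∀ a b, 1 ≤ a → a ≤ n → 1 ≤ b → b ≤ n → T.prec (σ a) (σ b) → a < b) ∧
  (∀ j, 1 ≤ j → j ≤ n → ∀ p ∈ T.guard (σ j),
      p.2.1.holds (ν (j - 1) p.1 + (t j - t (j - 1))) p.2.2) ∧
  (∀ j, 1 ≤ j → j ≤ n → ∀ c : C,
      (c ∈ T.reset (σ j) → ν j c = 0) ∧
      (c ∉ T.reset (σ j) → ν j c = ν (j - 1) c + (t j - t (j - 1))))

/-- A timed trace `τ` is compatible with the TPO iff there exist clock valuations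
making its induced (increasing-timestamp) sequence a run. -/
def TPO.Compatible {E C : Type} [Fintype E] (T : TPO E C) (τ : E → ℝ) : Prop :=
  ∃ (σ : ℕ → E) (t : ℕ → ℝ) (ν : ℕ → C → ℝ),
    (∀ j, 1 ≤ j → j ≤ Fintype.card E → t j = τ (σ j)) ∧
    (∀ j k, 1 ≤ j → j < k → k ≤ Fintype.card E → t j < t k) ∧
    T.IsRun (Fintype.card E) σ t ν

/-- Let `ρ` be a run of a race-free TPO, `j` a position, and `c` a
clock referred to in the guard of `σ_j`. With `E = {e | c ∈ R(e) ∧ e ≺ σ_j}`: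
(a) if `E = ∅` then no earlier event of the run resets `c`;
(b) if `E ≠ ∅` then `E` has a `≺`-maximum element, that element occurs at some
position `m < j` of the run, and no event strictly between positions `m` and `j`
resets `c` — i.e., the last reset of `c` before position `j` occurs exactly at the
`≺`-maximum element of `E`. -/
theorem race_free_last_reset_is_prec_maximum
    {E C : Type} (T : TPO E C) (hrf : T.RaceFree)
    (n : ℕ) (σ : ℕ → E) (t : ℕ → ℝ) (ν : ℕ → C → ℝ)
    (hrun : T.IsRun n σ t ν)
    (j : ℕ) (hj1 : 1 ≤ j) (hjn : j ≤ n)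
    (c : C) (hc : ∃ p ∈ T.guard (σ j), p.1 = c) :
    (({e : E | c ∈ T.reset e ∧ T.prec e (σ j)} = ∅) →
        ∀ k, 1 ≤ k → k < j → c ∉ T.reset (σ k)) ∧
    (({e : E | c ∈ T.reset e ∧ T.prec e (σ j)}.Nonempty) →
        ∃ m, 1 ≤ m ∧ m < j ∧
          σ m ∈ {e : E | c ∈ T.reset e ∧ T.prec e (σ j)} ∧
          (∀ e ∈ {e : E | c ∈ T.reset e ∧ T.prec e (σ j)},
              e = σ m ∨ T.prec e (σ m)) ∧
          (∀ k, m < k → k < j → c ∉ T.reset (σ k))) := by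
  classical
  obtain ⟨ht0, hν0, hbij, hmono, hlin, hguard, hreset⟩ := hrun
  have hinj := hbij.injOn
  have hsurj := hbij.surjOn
  have hdepj : T.Dependent (σ j) c := Or.inl hc
  constructor
  · intro hE k hk1 hkj hck
    have hkn : k ≤ n := le_trans (Nat.le_of_lt hkj) hjn
    have hne : σ k ≠ σ j := by
      intro h
      exact Nat.ne_of_lt hkj (hinj ⟨hk1, hkn⟩ ⟨hj1, hjn⟩ h)
    rcases hrf c (σ k) (σ j) (Or.inr hck) hdepj hne with h | h
    · exact Set.eq_empty_iff_forall_notMem.mp hE (σ k) ⟨hck, h⟩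
    · exact Nat.not_lt.mpr (Nat.le_of_lt hkj) (hlin j k hj1 hjn hk1 hkn h)
  · intro hEne
    set K : Finset ℕ := (Finset.Icc 1 n).filter
      (fun k => k < j ∧ c ∈ T.reset (σ k) ∧ T.prec (σ k) (σ j)) with hK
    have hmemK : ∀ k, k ∈ K ↔
        (1 ≤ k ∧ k ≤ n) ∧ k < j ∧ c ∈ T.reset (σ k) ∧ T.prec (σ k) (σ j) := by
      intro k
      simp [hK, Finset.mem_filter, Finset.mem_Icc, and_assoc]
    have hKne : K.Nonempty := by
      obtain ⟨e, hec, hep⟩ := hEne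
      obtain ⟨k, hkmem, hke⟩ := hsurj (Set.mem_univ e)
      refine ⟨k, (hmemK k).mpr ⟨⟨hkmem.1, hkmem.2⟩, ?_, ?_, ?_⟩⟩
      · exact hlin k j hkmem.1 hkmem.2 hj1 hjn (hke ▸ hep)
      · exact hke ▸ hec
      · exact hke ▸ hep
    set m := K.max' hKne with hm
    have hmK := K.max'_mem hKne
    rw [hmemK] at hmK
    obtain ⟨⟨hm1, hmn⟩, hmj, hmc, hmp⟩ := hmK
    have hle : ∀ k ∈ K, k ≤ m := fun k hk => K.le_max' k hk
    refine ⟨m, hm1, hmj, ⟨hmc, hmp⟩, ?_, ?_⟩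
    · intro e he
      obtain ⟨k, hkmem, hke⟩ := hsurj (Set.mem_univ e)
      have hkK : k ∈ K := (hmemK k).mpr ⟨⟨hkmem.1, hkmem.2⟩,
        hlin k j hkmem.1 hkmem.2 hj1 hjn (hke ▸ he.2), hke ▸ he.1, hke ▸ he.2⟩
      rcases eq_or_lt_of_le (hle k hkK) with h | h
      · exact Or.inl (hke ▸ h ▸ rfl)
      · refine Or.inr ?_
        have hne : σ k ≠ σ m := by
          intro heq
          exact Nat.ne_of_lt h (hinj ⟨hkmem.1, hkmem.2⟩ ⟨hm1, hmn⟩ heq)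
        rcases hrf c (σ k) (σ m) (Or.inr (hke ▸ he.1)) (Or.inr hmc) hne with h2 | h2
        · exact hke ▸ h2
        · exact absurd (hlin m k hm1 hmn hkmem.1 hkmem.2 h2)
            (Nat.not_lt.mpr (Nat.le_of_lt h))
    · intro k hmk hkj hck
      have hk1 : 1 ≤ k := le_trans hm1 (Nat.le_of_lt hmk)
      have hkn : k ≤ n := le_trans (Nat.le_of_lt hkj) hjn
      have hne : σ k ≠ σ j := by
        intro h
        exact Nat.ne_of_lt hkj (hinj ⟨hk1, hkn⟩ ⟨hj1, hjn⟩ h)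
      rcases hrf c (σ k) (σ j) (Or.inr hck) hdepj hne with h | h
      · have hkK : k ∈ K := (hmemK k).mpr ⟨⟨hk1, hkn⟩, hkj, hck, h⟩
        exact Nat.not_lt.mpr (hle k hkK) hmk
      · exact Nat.not_lt.mpr (Nat.le_of_lt hkj) (hlin j k hj1 hjn hk1 hkn h)
end

section
/- Let ρ: (σ_1, t^{(1)}, ν_1), …, (σ_n, t^{(n)}, ν_n) be a run of a race-free TPO, let j be a position, and let c be a clock referred to in the guard G(σ_j). Define E = { e ∈ Π | c ∈ R(e) and e ≺ σ_j }. Then the value of clock c at the moment the guard of σ_j is checked, namely (ν_{j−1} ⊕ Δt^{(j)})(c), equals t^{(j)} if E = ∅, and equals t^{(j)} − t^{(m)} where σ_m is the ≺-maximum element of E if E ≠ ∅. Consequently, each atomic guard conjunct c ⋈ a of G(σ_j) holds in the run if and only if t^{(j)} ⋈ a (when E = ∅) or t^{(j)} − t^{(m)} ⋈ a (when E ≠ ∅). -/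
/-- Let `ρ` be a run of a race-free TPO, `j` a position, and `c` a
clock referred to in the guard of `σ_j`. With `E = {e | c ∈ R(e) ∧ e ≺ σ_j}`, the
value of `c` when the guard of `σ_j` is checked, namely `(ν_{j−1} ⊕ Δt^{(j)})(c)`,
equals `t^{(j)}` if `E = ∅`, and equals `t^{(j)} − t^{(m)}` where `σ_m` is the
`≺`-maximum of `E` otherwise. Consequently each atomic guard conjunct `c ⋈ a` of
`G(σ_j)` holds in the run iff `t^{(j)} ⋈ a` (when `E = ∅`), respectively
`t^{(j)} − t^{(m)} ⋈ a` (when `E ≠ ∅`). -/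
theorem race_free_clock_value_at_guard_check
    {E C : Type} (T : TPO E C) (hrf : T.RaceFree)
    (n : ℕ) (σ : ℕ → E) (t : ℕ → ℝ) (ν : ℕ → C → ℝ)
    (hrun : T.IsRun n σ t ν)
    (j : ℕ) (hj1 : 1 ≤ j) (hjn : j ≤ n)
    (c : C) (hc : ∃ p ∈ T.guard (σ j), p.1 = c) :
    (({e : E | c ∈ T.reset e ∧ T.prec e (σ j)} = ∅) →
        ν (j - 1) c + (t j - t (j - 1)) = t j) ∧
    (∀ m, 1 ≤ m → m ≤ n →
        σ m ∈ {e : E | c ∈ T.reset e ∧ T.prec e (σ j)} →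
        (∀ e ∈ {e : E | c ∈ T.reset e ∧ T.prec e (σ j)},
            e = σ m ∨ T.prec e (σ m)) →
        ν (j - 1) c + (t j - t (j - 1)) = t j - t m) ∧
    (∀ p ∈ T.guard (σ j), p.1 = c →
        (({e : E | c ∈ T.reset e ∧ T.prec e (σ j)} = ∅) →
            (p.2.1.holds (ν (j - 1) c + (t j - t (j - 1))) p.2.2 ↔
              p.2.1.holds (t j) p.2.2)) ∧
        (∀ m, 1 ≤ m → m ≤ n →
            σ m ∈ {e : E | c ∈ T.reset e ∧ T.prec e (σ j)} →
            (∀ e ∈ {e : E | c ∈ T.reset e ∧ T.prec e (σ j)},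
                e = σ m ∨ T.prec e (σ m)) →
            (p.2.1.holds (ν (j - 1) c + (t j - t (j - 1))) p.2.2 ↔
              p.2.1.holds (t j - t m) p.2.2))) := by
  obtain ⟨ht0, hν0, hbij, hmono, hlin, hguard, hstep⟩ := hrun
  have hdepj : T.Dependent (σ j) c := Or.inl hc
  have hinj := hbij.injOn
  have hkey : ∀ i, 1 ≤ i → i < j → c ∈ T.reset (σ i) →
      σ i ∈ {e : E | c ∈ T.reset e ∧ T.prec e (σ j)} := by
    intro i h1 h2 hres
    have hne : σ i ≠ σ j := by
      intro h
      have := hinj (Set.mem_Icc.mpr ⟨h1, le_trans (le_of_lt h2) hjn⟩)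
        (Set.mem_Icc.mpr ⟨hj1, hjn⟩) h
      omega
    rcases hrf c (σ i) (σ j) (Or.inr hres) hdepj hne with h | h
    · exact ⟨hres, h⟩
    · exact absurd (hlin j i hj1 hjn h1 (le_trans (le_of_lt h2) hjn) h) (by omega)
  have heq1 : ({e : E | c ∈ T.reset e ∧ T.prec e (σ j)} = ∅) →
      ν (j - 1) c + (t j - t (j - 1)) = t j := by
    intro hE
    have hnores : ∀ i, 1 ≤ i → i < j → c ∉ T.reset (σ i) := by
      intro i h1 h2 hres
      exact absurd (hkey i h1 h2 hres) (by rw [hE]; exact Set.notMem_empty _)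
    have hval : ∀ k, k ≤ j - 1 → ν k c = t k := by
      intro k
      induction k with
      | zero => intro _; rw [hν0, ht0]
      | succ l ih =>
        intro hk
        have h1 : 1 ≤ l + 1 := by omega
        have hs := (hstep (l+1) h1 (by omega) c).2 (hnores _ h1 (by omega))
        simp only [Nat.add_sub_cancel] at hs
        rw [hs, ih (by omega)]; ring
    rw [hval (j-1) le_rfl]; ring
  have heq2 : ∀ m, 1 ≤ m → m ≤ n →
      σ m ∈ {e : E | c ∈ T.reset e ∧ T.prec e (σ j)} →
      (∀ e ∈ {e : E | c ∈ T.reset e ∧ T.prec e (σ j)},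
          e = σ m ∨ T.prec e (σ m)) →
      ν (j - 1) c + (t j - t (j - 1)) = t j - t m := by
    intro m hm1 hmn hmem hmax
    have hmj : m < j := hlin m j hm1 hmn hj1 hjn hmem.2
    have hnores : ∀ i, m < i → i < j → c ∉ T.reset (σ i) := by
      intro i h1 h2 hres
      have hEi := hkey i (by omega) h2 hres
      rcases hmax _ hEi with h | h
      · have := hinj (Set.mem_Icc.mpr ⟨by omega, by omega⟩)
          (Set.mem_Icc.mpr ⟨hm1, hmn⟩) h
        omega
      · have := hlin i m (by omega) (by omega) hm1 hmn h
        omega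
    have hνm : ν m c = 0 := (hstep m hm1 hmn c).1 hmem.1
    have hval : ∀ k, m ≤ k → k ≤ j - 1 → ν k c = t k - t m := by
      intro k hk1
      induction k, hk1 using Nat.le_induction with
      | base => intro _; rw [hνm]; ring
      | succ l hl ih =>
        intro hk2
        have h1 : 1 ≤ l + 1 := by omega
        have hs := (hstep (l+1) h1 (by omega) c).2 (hnores _ (by omega) (by omega))
        simp only [Nat.add_sub_cancel] at hs
        rw [hs, ih (by omega)]; ring
    rw [hval (j-1) (by omega) le_rfl]; ring
  refine ⟨heq1, heq2, ?_⟩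
  intro p hp hpc
  constructor
  · intro hE
    rw [heq1 hE]
  · intro m hm1 hmn hmem hmax
    rw [heq2 m hm1 hmn hmem hmax]
end

section
/- Let a race-free TPO arise from the dedicated-clock construction for a constraint set S: clock c_i is reset exactly at event e_i, and every guard conjunct on c_i occurs at some event e_k with e_i ≺ e_k and corresponds to an inequality (t_k − t_i) ⋈ a in S. For a clock c_i, let L(i) denote the ≺-supremum of E_i = { e_k | some inequality (t_k − t_i) ⋈ a is in S }, assumed to exist. Suppose two distinct clocks c_i and c_j satisfy L(i) ⪯ e_j. Then the TPO obtained by replacing every occurrence of c_j by c_i (in both resets and guards, deleting clock c_j) is race-free and has exactly the same set of compatible timed traces as the original TPO. -/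
lemma valTwo (N p q : ℕ) (t ν : ℕ → ℝ) (hp : 1 ≤ p) (hpq : p < q)
    (ht0 : t 0 = 0) (h0 : ν 0 = 0)
    (h : ∀ m, 1 ≤ m → m ≤ N →
      ((m = p ∨ m = q) → ν m = 0) ∧ (¬(m = p ∨ m = q) → ν m = ν (m-1) + (t m - t (m-1)))) :
    ∀ m, m ≤ N → ν m = if q ≤ m then t m - t q else if p ≤ m then t m - t p else t m := by
  intro m
  induction m with
  | zero =>
    intro _
    rw [if_neg (by omega), if_neg (by omega), h0, ht0]
  | succ m ih =>
    intro hm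
    obtain ⟨hr, hnr⟩ := h (m+1) (by omega) hm
    by_cases h1 : m + 1 = q
    · rw [hr (Or.inr h1), h1, if_pos le_rfl]; ring
    by_cases h2 : m + 1 = p
    · rw [hr (Or.inl h2), h2, if_neg (by omega), if_pos le_rfl]; ring
    · rw [hnr (by tauto), Nat.add_sub_cancel, ih (by omega)]
      split_ifs <;> first | (exfalso; omega) | ring

lemma posFacts {n : ℕ} (N : ℕ) (prec : Fin n → Fin n → Prop) (σ : ℕ → Fin n)
    (hbij : Set.BijOn σ (Set.Icc 1 N) (Set.univ : Set (Fin n)))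
    (hlin : ∀ a b, 1 ≤ a → a ≤ N → 1 ≤ b → b ≤ N → prec (σ a) (σ b) → a < b) :
    ∃ pos : Fin n → ℕ, (∀ e, (1 ≤ pos e ∧ pos e ≤ N) ∧ σ (pos e) = e) ∧
      (∀ m e, 1 ≤ m → m ≤ N → σ m = e → m = pos e) ∧
      (∀ a b, prec a b → pos a < pos b) := by
  have hsur : ∀ e : Fin n, ∃ m, (1 ≤ m ∧ m ≤ N) ∧ σ m = e := by
    intro e
    obtain ⟨m, hm, he⟩ := hbij.2.2 (Set.mem_univ e)
    exact ⟨m, ⟨hm.1, hm.2⟩, he⟩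
  choose pos hpos hσpos using hsur
  have huniq : ∀ m e, 1 ≤ m → m ≤ N → σ m = e → m = pos e := by
    intro m e h1 h2 he
    exact hbij.2.1 (Set.mem_Icc.mpr ⟨h1, h2⟩)
      (Set.mem_Icc.mpr ⟨(hpos e).1, (hpos e).2⟩) (by rw [he, hσpos])
  refine ⟨pos, fun e => ⟨hpos e, hσpos e⟩, huniq, fun a b hab => ?_⟩
  exact hlin _ _ (hpos a).1 (hpos a).2 (hpos b).1 (hpos b).2
    (by rw [hσpos, hσpos]; exact hab)

/-- Let a race-free TPO `T` arise from the dedicated-clock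
construction for a constraint set `S` (clock type `Option (Fin n)`, `none` being the
never-reset clock `c₀`; clock `c_i` is reset exactly at event `e_i`, and every guard
conjunct on `c_i` occurs at an event `e_k` with `e_i ≺ e_k` corresponding to an
inequality `(t_k − t_i) ⋈ a` of `S`). Let `L i` be the `≺`-supremum (assumed to
exist) of `E_i = {e_k | some (t_k − t_i) ⋈ a is in S}`. If two distinct clocks
`c_i, c_j` satisfy `L i ⪯ e_j`, then the TPO `T'` obtained from `T` by replacing
every occurrence of `c_j` by `c_i` (in both resets and guards, deleting `c_j`) is
race-free and has exactly the same compatible timed traces as `T`. -/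
theorem clock_reuse_preserves_race_freedom_and_traces
    {n : ℕ} (prec : Fin n → Fin n → Prop)
    (hirr : ∀ e, ¬ prec e e)
    (htrans : ∀ e₁ e₂ e₃, prec e₁ e₂ → prec e₂ e₃ → prec e₁ e₃)
    (S : Finset (Fin n × Option (Fin n) × Cmp × ℝ))
    (hS : ∀ q ∈ S, (0 : ℝ) ≤ q.2.2.2 ∧ ∀ i', q.2.1 = some i' → prec i' q.1)
    (T : TPO (Fin n) (Option (Fin n)))
    (hTprec : T.prec = prec)
    (hTreset : ∀ k : Fin n,
        T.reset k = {c : Option (Fin n) | c = some k ∧ ∃ q ∈ S, q.2.1 = some k})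
    (hTguard : ∀ (k : Fin n) (p : Option (Fin n) × Cmp × ℝ),
        p ∈ T.guard k ↔ (k, p) ∈ S)
    (hrf : T.RaceFree)
    (i j : Fin n) (hij : i ≠ j)
    (hi : ∃ q ∈ S, q.2.1 = some i) (hj : ∃ q ∈ S, q.2.1 = some j)
    (Li : Fin n)
    (hL_ub : ∀ k : Fin n, (∃ q ∈ S, q.1 = k ∧ q.2.1 = some i) →
        (prec k Li ∨ k = Li))
    (hL_least : ∀ x : Fin n,
        (∀ k : Fin n, (∃ q ∈ S, q.1 = k ∧ q.2.1 = some i) → (prec k x ∨ k = x)) →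
        (prec Li x ∨ Li = x))
    (hreuse : prec Li j ∨ Li = j)
    (T' : TPO (Fin n) (Option (Fin n)))
    (hT'prec : T'.prec = prec)
    (hT'reset : ∀ k : Fin n,
        T'.reset k =
          (fun c : Option (Fin n) => if c = some j then some i else c) '' T.reset k)
    (hT'guard : ∀ (k : Fin n) (p : Option (Fin n) × Cmp × ℝ),
        p ∈ T'.guard k ↔
          ∃ p' ∈ T.guard k,
            p = ((if p'.1 = some j then some i else p'.1), p'.2)) :
    T'.RaceFree ∧
    ∀ τ : Fin n → ℝ, (∀ e, 0 ≤ τ e) → Function.Injective τ →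
      (T'.Compatible τ ↔ T.Compatible τ) := by
  have hsne : (some i : Option (Fin n)) ≠ some j := fun h => hij (Option.some_inj.mp h)
  -- pure order facts
  have A2 : ∀ k : Fin n, (∃ q ∈ S, q.1 = k ∧ q.2.1 = some i) → prec k j ∨ k = j := by
    intro k hk
    rcases hL_ub k hk with h | h
    · rcases hreuse with h' | h'
      · exact Or.inl (htrans _ _ _ h h')
      · rw [h'] at h; exact Or.inl h
    · rw [h]; exact hreuse
  have A1 : prec i j := by
    obtain ⟨q, hq, hqi⟩ := hi
    have h1 : prec i q.1 := (hS q hq).2 i hqi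
    rcases A2 q.1 ⟨q, hq, rfl, hqi⟩ with h | h
    · exact htrans _ _ _ h1 h
    · rwa [h] at h1
  have A3 : ∀ k : Fin n, ∀ q ∈ S, q.1 = k → q.2.1 = some j → prec j k := by
    intro k q hq h1 h2
    rw [← h1]; exact (hS q hq).2 j h2
  -- reset characterizations
  have R1 : ∀ (k : Fin n) (c : Option (Fin n)),
      c ∈ T.reset k ↔ (c = some k ∧ ∃ q ∈ S, q.2.1 = some k) := by
    intro k c; rw [hTreset k]; exact Iff.rfl
  have R2 : ∀ k : Fin n, some i ∈ T.reset k ↔ k = i := by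
    intro k
    rw [R1]
    constructor
    · rintro ⟨hc, -⟩; exact (Option.some_inj.mp hc).symm
    · rintro rfl; exact ⟨rfl, hi⟩
  have R3 : ∀ k : Fin n, some j ∈ T.reset k ↔ k = j := by
    intro k
    rw [R1]
    constructor
    · rintro ⟨hc, -⟩; exact (Option.some_inj.mp hc).symm
    · rintro rfl; exact ⟨rfl, hj⟩
  have R4 : ∀ k : Fin n, some i ∈ T'.reset k ↔ (k = i ∨ k = j) := by
    intro k
    rw [hT'reset k]
    constructor
    · rintro ⟨c', hc', hfc⟩
      obtain ⟨rfl, -⟩ := (R1 k c').mp hc'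
      have hfc' : (if (some k : Option (Fin n)) = some j then some i else some k)
          = some i := hfc
      by_cases hk : (some k : Option (Fin n)) = some j
      · exact Or.inr (Option.some_inj.mp hk)
      · rw [if_neg hk] at hfc'
        exact Or.inl (Option.some_inj.mp hfc')
    · rintro (rfl | rfl)
      · exact ⟨some k, (R2 k).mpr rfl, if_neg hsne⟩
      · exact ⟨some k, (R3 k).mpr rfl, if_pos rfl⟩
  have R5 : ∀ (k : Fin n), some j ∉ T'.reset k := by
    intro k h
    rw [hT'reset k] at h
    obtain ⟨c', -, hfc⟩ := h
    have hfc' : (if c' = some j then (some i : Option (Fin n)) else c') = some j := hfc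
    by_cases hc : c' = some j
    · rw [if_pos hc] at hfc'; exact hsne hfc'
    · rw [if_neg hc] at hfc'; exact hc hfc'
  have R6 : ∀ (k : Fin n) (c : Option (Fin n)), c ≠ some i → c ≠ some j →
      (c ∈ T'.reset k ↔ c ∈ T.reset k) := by
    intro k c hci hcj
    rw [hT'reset k]
    constructor
    · rintro ⟨c', hc', hfc⟩
      have hfc' : (if c' = some j then (some i : Option (Fin n)) else c') = c := hfc
      by_cases hc : c' = some j
      · rw [if_pos hc] at hfc'; exact absurd hfc'.symm hci
      · rw [if_neg hc] at hfc'; rwa [hfc'] at hc'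
    · intro hc; exact ⟨c, hc, if_neg hcj⟩
  -- dependency transfer
  have Dep_i' : ∀ e : Fin n, T'.Dependent e (some i) →
      T.Dependent e (some i) ∨ T.Dependent e (some j) := by
    intro e h
    rcases h with ⟨p, hp, hp1⟩ | hres
    · obtain ⟨p', hp', rfl⟩ := (hT'guard e p).mp hp
      by_cases hc : p'.1 = some j
      · exact Or.inr (Or.inl ⟨p', hp', hc⟩)
      · simp only [if_neg hc] at hp1
        exact Or.inl (Or.inl ⟨p', hp', hp1⟩)
    · rcases (R4 e).mp hres with rfl | rfl
      · exact Or.inl (Or.inr ((R2 _).mpr rfl))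
      · exact Or.inr (Or.inr ((R3 _).mpr rfl))
  have Dep_j' : ∀ e : Fin n, ¬ T'.Dependent e (some j) := by
    intro e h
    rcases h with ⟨p, hp, hp1⟩ | hres
    · obtain ⟨p', hp', rfl⟩ := (hT'guard e p).mp hp
      by_cases hc : p'.1 = some j
      · simp only [if_pos hc] at hp1; exact hsne hp1
      · simp only [if_neg hc] at hp1; exact hc hp1
    · exact R5 e hres
  have Dep_other : ∀ (e : Fin n) (c : Option (Fin n)), c ≠ some i → c ≠ some j →
      T'.Dependent e c → T.Dependent e c := by
    intro e c hci hcj h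
    rcases h with ⟨p, hp, hp1⟩ | hres
    · obtain ⟨p', hp', rfl⟩ := (hT'guard e p).mp hp
      by_cases hc : p'.1 = some j
      · simp only [if_pos hc] at hp1; exact absurd hp1.symm hci
      · simp only [if_neg hc] at hp1; exact Or.inl ⟨p', hp', hp1⟩
    · exact Or.inr ((R6 e c hci hcj).mp hres)
  have Dep_chain_i : ∀ e : Fin n, T.Dependent e (some i) → prec e j ∨ e = j := by
    intro e h
    rcases h with ⟨p, hp, hp1⟩ | hres
    · exact A2 e ⟨(e, p), (hTguard e p).mp hp, rfl, hp1⟩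
    · rw [(R2 e).mp hres]; exact Or.inl A1
  have Dep_chain_j : ∀ e : Fin n, T.Dependent e (some j) → prec j e ∨ e = j := by
    intro e h
    rcases h with ⟨p, hp, hp1⟩ | hres
    · exact Or.inl (A3 e (e, p) ((hTguard e p).mp hp) rfl hp1)
    · exact Or.inr ((R3 e).mp hres)
  have cross : ∀ e₁ e₂ : Fin n, T.Dependent e₁ (some i) → T.Dependent e₂ (some j) →
      e₁ ≠ e₂ → prec e₁ e₂ ∨ prec e₂ e₁ := by
    intro e₁ e₂ h1 h2 hne
    rcases Dep_chain_i e₁ h1 with hc1 | rfl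
    · rcases Dep_chain_j e₂ h2 with hc2 | rfl
      · exact Or.inl (htrans _ _ _ hc1 hc2)
      · exact Or.inl hc1
    · rcases Dep_chain_j e₂ h2 with hc2 | rfl
      · exact Or.inl hc2
      · exact absurd rfl hne
  constructor
  · -- race freedom
    intro c e₁ e₂ h1 h2 hne
    rw [hT'prec]
    by_cases hcj : c = some j
    · rw [hcj] at h1; exact absurd h1 (Dep_j' e₁)
    by_cases hci : c = some i
    · rw [hci] at h1 h2
      rcases Dep_i' e₁ h1 with d1 | d1 <;> rcases Dep_i' e₂ h2 with d2 | d2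
      · have := hrf (some i) e₁ e₂ d1 d2 hne; rwa [hTprec] at this
      · exact cross e₁ e₂ d1 d2 hne
      · exact (cross e₂ e₁ d2 d1 hne.symm).symm
      · have := hrf (some j) e₁ e₂ d1 d2 hne; rwa [hTprec] at this
    · have := hrf c e₁ e₂ (Dep_other _ _ hci hcj h1) (Dep_other _ _ hci hcj h2) hne
      rwa [hTprec] at this
  · -- traces
    intro τ hτ0 hτinj
    constructor
    · -- T' compatible → T compatible
      rintro ⟨σ, t, ν', hτeq, hmono, ht0, hν0, hbij, htmon, hlin, hguard, hreset⟩
      rw [hT'prec] at hlin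
      obtain ⟨pos, hpos, huniq, hlt⟩ :=
        posFacts (Fintype.card (Fin n)) prec σ hbij hlin
      have hpij : pos i < pos j := hlt _ _ A1
      have hresi : ∀ m, 1 ≤ m → m ≤ Fintype.card (Fin n) →
          ((m = pos i ∨ m = pos j) → ν' m (some i) = 0) ∧
          (¬(m = pos i ∨ m = pos j) →
            ν' m (some i) = ν' (m-1) (some i) + (t m - t (m-1))) := by
        intro m h1 h2
        have hmem : some i ∈ T'.reset (σ m) ↔ (m = pos i ∨ m = pos j) := by
          rw [R4]
          constructor
          · rintro (h | h)
            · exact Or.inl (huniq m i h1 h2 h)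
            · exact Or.inr (huniq m j h1 h2 h)
          · rintro (rfl | rfl)
            · exact Or.inl (hpos i).2
            · exact Or.inr (hpos j).2
        exact ⟨fun hm => (hreset m h1 h2 (some i)).1 (hmem.mpr hm),
          fun hm => (hreset m h1 h2 (some i)).2 (fun hc => hm (hmem.mp hc))⟩
      have Gi : ∀ m, m ≤ Fintype.card (Fin n) → ν' m (some i) =
          if pos j ≤ m then t m - t (pos j)
          else if pos i ≤ m then t m - t (pos i) else t m :=
        valTwo _ (pos i) (pos j) t (fun m => ν' m (some i)) (hpos i).1.1 hpij ht0
          (hν0 _) hresi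
      refine ⟨σ, t, fun m c =>
        if c = some j then (if pos j ≤ m then t m - t (pos j) else t m)
        else if c = some i then (if pos i ≤ m then t m - t (pos i) else t m)
        else ν' m c, hτeq, hmono, ht0, ?_, hbij, htmon, ?_, ?_, ?_⟩
      · -- ν 0 = 0
        intro c
        simp only []
        by_cases hcj : c = some j
        · rw [if_pos hcj, if_neg (by have := (hpos j).1.1; omega), ht0]
        by_cases hci : c = some i
        · rw [if_neg hcj, if_pos hci, if_neg (by have := (hpos i).1.1; omega), ht0]
        · rw [if_neg hcj, if_neg hci]; exact hν0 c
      · -- linearization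
        simp only [hTprec]; exact hlin
      · -- guards
        intro m h1 h2 p' hp'
        have hg := hguard m h1 h2 ((if p'.1 = some j then some i else p'.1), p'.2)
          ((hT'guard _ _).mpr ⟨p', hp', rfl⟩)
        simp only [] at hg ⊢
        have hval : (if p'.1 = some j then (if pos j ≤ m - 1 then t (m-1) - t (pos j) else t (m-1))
            else if p'.1 = some i then (if pos i ≤ m - 1 then t (m-1) - t (pos i) else t (m-1))
            else ν' (m-1) p'.1)
            = ν' (m - 1) (if p'.1 = some j then some i else p'.1) := by
          by_cases hcj : p'.1 = some j
          · rw [if_pos hcj, if_pos hcj]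
            have hjm : pos j < m := by
              have h' := A3 (σ m) (σ m, p') ((hTguard _ _).mp hp') rfl hcj
              have := hlt j (σ m) h'
              rwa [← huniq m (σ m) h1 h2 rfl] at this
            rw [Gi (m-1) (by omega)]
            split_ifs <;> first | (exfalso; omega) | rfl
          by_cases hci : p'.1 = some i
          · rw [if_neg hcj, if_neg hcj, if_pos hci, hci]
            have hmj : m ≤ pos j := by
              rcases A2 (σ m) ⟨(σ m, p'), (hTguard _ _).mp hp', rfl, hci⟩ with h' | h'
              · have := hlt _ _ h'
                rw [← huniq m (σ m) h1 h2 rfl] at this; omega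
              · rw [huniq m j h1 h2 h']
            rw [Gi (m-1) (by omega)]
            split_ifs <;> first | (exfalso; omega) | rfl
          · rw [if_neg hcj, if_neg hcj, if_neg hci]
        rw [hval]
        exact hg
      · -- resets
        intro m h1 h2 c
        simp only []
        by_cases hcj : c = some j
        · subst hcj
          rw [if_pos rfl, if_pos rfl]
          constructor
          · intro hmem
            have hm : m = pos j := huniq m j h1 h2 ((R3 _).mp hmem)
            rw [if_pos (show pos j ≤ m by omega), hm, sub_self]
          · intro hmem
            have hne : m ≠ pos j := by
              intro h
              exact hmem ((R3 (σ m)).mpr (by rw [h, (hpos j).2]))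
            split_ifs <;> first | (exfalso; omega) | ring
        by_cases hci : c = some i
        · subst hci
          rw [if_neg hcj, if_neg hcj, if_pos rfl, if_pos rfl]
          constructor
          · intro hmem
            have hm : m = pos i := huniq m i h1 h2 ((R2 _).mp hmem)
            rw [if_pos (show pos i ≤ m by omega), hm, sub_self]
          · intro hmem
            have hne : m ≠ pos i := by
              intro h
              exact hmem ((R2 (σ m)).mpr (by rw [h, (hpos i).2]))
            split_ifs <;> first | (exfalso; omega) | ring
        · rw [if_neg hcj, if_neg hcj, if_neg hci, if_neg hci]
          have hmem := (R6 (σ m) c hci hcj)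
          have hr := hreset m h1 h2 c
          exact ⟨fun h => hr.1 (hmem.mpr h), fun h => hr.2 (fun h' => h (hmem.mp h'))⟩
    · -- T compatible → T' compatible
      rintro ⟨σ, t, ν, hτeq, hmono, ht0, hν0, hbij, htmon, hlin, hguard, hreset⟩
      rw [hTprec] at hlin
      obtain ⟨pos, hpos, huniq, hlt⟩ :=
        posFacts (Fintype.card (Fin n)) prec σ hbij hlin
      have hpij : pos i < pos j := hlt _ _ A1
      have mkres : ∀ x : Fin n, (∀ m, 1 ≤ m → m ≤ Fintype.card (Fin n) →
          ((m = pos x ∨ m = Fintype.card (Fin n) + 1) → ν m (some x) = 0) ∧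
          (¬(m = pos x ∨ m = Fintype.card (Fin n) + 1) →
            ν m (some x) = ν (m-1) (some x) + (t m - t (m-1)))) →
          ∀ m, m ≤ Fintype.card (Fin n) → ν m (some x) =
            if pos x ≤ m then t m - t (pos x) else t m := by
        intro x hres m hm
        have := valTwo _ (pos x) (Fintype.card (Fin n) + 1) t (fun m => ν m (some x))
          (hpos x).1.1 (by have := (hpos x).1.2; omega) ht0 (hν0 _) hres m hm
        rwa [if_neg (by omega)] at this
      have hresx : ∀ x : Fin n, (∃ q ∈ S, q.2.1 = some x) →
          ∀ m, 1 ≤ m → m ≤ Fintype.card (Fin n) →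
          ((m = pos x ∨ m = Fintype.card (Fin n) + 1) → ν m (some x) = 0) ∧
          (¬(m = pos x ∨ m = Fintype.card (Fin n) + 1) →
            ν m (some x) = ν (m-1) (some x) + (t m - t (m-1))) := by
        intro x hx m h1 h2
        have Rx : ∀ k : Fin n, some x ∈ T.reset k ↔ k = x := by
          intro k
          rw [R1]
          constructor
          · rintro ⟨hc, -⟩; exact (Option.some_inj.mp hc).symm
          · rintro rfl; exact ⟨rfl, hx⟩
        have hmem : some x ∈ T.reset (σ m) ↔ m = pos x := by
          rw [Rx]
          constructor
          · intro h; exact huniq m x h1 h2 h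
          · rintro rfl; exact (hpos x).2
        constructor
        · rintro (hm | hm)
          · exact (hreset m h1 h2 (some x)).1 (hmem.mpr hm)
          · omega
        · intro hm
          exact (hreset m h1 h2 (some x)).2 (fun hc => hm (Or.inl (hmem.mp hc)))
      have Fi : ∀ m, m ≤ Fintype.card (Fin n) → ν m (some i) =
          if pos i ≤ m then t m - t (pos i) else t m := mkres i (hresx i hi)
      have Fj : ∀ m, m ≤ Fintype.card (Fin n) → ν m (some j) =
          if pos j ≤ m then t m - t (pos j) else t m := mkres j (hresx j hj)
      refine ⟨σ, t, fun m c =>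
        if c = some j then t m
        else if c = some i then
          (if pos j ≤ m then t m - t (pos j)
           else if pos i ≤ m then t m - t (pos i) else t m)
        else ν m c, hτeq, hmono, ht0, ?_, hbij, htmon, ?_, ?_, ?_⟩
      · -- ν' 0 = 0
        intro c
        simp only []
        by_cases hcj : c = some j
        · rw [if_pos hcj]; exact ht0
        by_cases hci : c = some i
        · rw [if_neg hcj, if_pos hci, if_neg (by have := (hpos j).1.1; omega),
            if_neg (by have := (hpos i).1.1; omega)]
          exact ht0
        · rw [if_neg hcj, if_neg hci]; exact hν0 c
      · -- linearization
        simp only [hT'prec]; exact hlin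
      · -- guards
        intro m h1 h2 p hp
        obtain ⟨p', hp', rfl⟩ := (hT'guard _ _).mp hp
        have hg := hguard m h1 h2 p' hp'
        simp only [] at hg ⊢
        have hval : (if (if p'.1 = some j then some i else p'.1) = some j then t (m-1)
            else if (if p'.1 = some j then some i else p'.1) = some i then
              (if pos j ≤ m - 1 then t (m-1) - t (pos j)
               else if pos i ≤ m - 1 then t (m-1) - t (pos i) else t (m-1))
            else ν (m-1) (if p'.1 = some j then some i else p'.1))
            = ν (m-1) p'.1 := by
          by_cases hcj : p'.1 = some j
          · rw [if_pos hcj, if_neg hsne, if_pos rfl, hcj]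
            have hjm : pos j < m := by
              have h' := A3 (σ m) (σ m, p') ((hTguard _ _).mp hp') rfl hcj
              have := hlt j (σ m) h'
              rwa [← huniq m (σ m) h1 h2 rfl] at this
            rw [Fj (m-1) (by omega)]
            split_ifs <;> first | (exfalso; omega) | rfl
          by_cases hci : p'.1 = some i
          · rw [if_neg hcj, if_neg hcj, if_pos hci, hci]
            have hmj : m ≤ pos j := by
              rcases A2 (σ m) ⟨(σ m, p'), (hTguard _ _).mp hp', rfl, hci⟩ with h' | h'
              · have := hlt _ _ h'
                rw [← huniq m (σ m) h1 h2 rfl] at this; omega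
              · rw [huniq m j h1 h2 h']
            rw [Fi (m-1) (by omega)]
            split_ifs <;> first | (exfalso; omega) | rfl
          · rw [if_neg hcj, if_neg hcj, if_neg hci]
        rw [hval]
        exact hg
      · -- resets
        intro m h1 h2 c
        simp only []
        by_cases hcj : c = some j
        · subst hcj
          rw [if_pos rfl, if_pos rfl]
          refine ⟨fun hmem => absurd hmem (R5 _), fun _ => by ring⟩
        by_cases hci : c = some i
        · subst hci
          rw [if_neg hcj, if_neg hcj, if_pos rfl, if_pos rfl]
          have hmem : some i ∈ T'.reset (σ m) ↔ (m = pos i ∨ m = pos j) := by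
            rw [R4]
            constructor
            · rintro (h | h)
              · exact Or.inl (huniq m i h1 h2 h)
              · exact Or.inr (huniq m j h1 h2 h)
            · rintro (rfl | rfl)
              · exact Or.inl (hpos i).2
              · exact Or.inr (hpos j).2
          constructor
          · intro h
            rcases hmem.mp h with hm | hm
            · rw [if_neg (show ¬ pos j ≤ m by omega), if_pos (show pos i ≤ m by omega),
                hm, sub_self]
            · rw [if_pos (show pos j ≤ m by omega), hm, sub_self]
          · intro h
            have hne : ¬(m = pos i ∨ m = pos j) := fun hc => h (hmem.mpr hc)
            split_ifs <;> first | (exfalso; omega) | ring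
        · rw [if_neg hcj, if_neg hcj, if_neg hci, if_neg hci]
          have hmem := R6 (σ m) c hci hcj
          have hr := hreset m h1 h2 c
          exact ⟨fun h => hr.1 (hmem.mp h), fun h => hr.2 (fun h' => h (hmem.mpr h'))⟩
end
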